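/- arXiv:0711.1680 — 2 statements merged into one kernel-verified Lean document; each statement's English description precedes it below -/
import Mathlib

section
/- For any n×n matrix A and any vector X ∈ ℚ^{C(n,2)}, the matrix Mat(A^{∨2}·Xᵀ) equals AX̂Aᵀ − D⁻, where D⁻ is the diagonal matrix with entries D⁻_{ii} = (AX̂Aᵀ)_{ii}; in particular tr D⁻ = tr(AX̂Aᵀ). -/
open Matrix BigOperators Filter

abbrev Pairs (n : ℕ) := {p : Fin n × Fin n // p.1 < p.2}

def zeonSq {n : ℕ} {R : Type*} [CommRing R] (A : Matrix (Fin n) (Fin n) R) :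
    Matrix (Pairs n) (Pairs n) R :=
  Matrix.of fun I J =>
    A I.1.1 J.1.1 * A I.1.2 J.1.2 + A I.1.1 J.1.2 * A I.1.2 J.1.1

def matOf {n : ℕ} {R : Type*} [CommRing R] (X : Pairs n → R) :
    Matrix (Fin n) (Fin n) R :=
  Matrix.of fun i j =>
    if h : i < j then X ⟨(i, j), h⟩ else if h' : j < i then X ⟨(j, i), h'⟩ else 0

lemma matOf_lt {n : ℕ} (X : Pairs n → ℚ) {i j : Fin n} (h : i < j) :
    matOf X i j = X ⟨(i, j), h⟩ := by simp [matOf, h]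

lemma matOf_gt {n : ℕ} (X : Pairs n → ℚ) {i j : Fin n} (h : j < i) :
    matOf X i j = X ⟨(j, i), h⟩ := by simp [matOf, h, not_lt_of_gt h]

lemma matOf_eq {n : ℕ} (X : Pairs n → ℚ) (i : Fin n) : matOf X i i = 0 := by
  simp [matOf]

def pairSwapEquiv (n : ℕ) : Pairs n ≃ {p : Fin n × Fin n // p.2 < p.1} :=
  ⟨fun K => ⟨K.1.swap, K.2⟩, fun K => ⟨K.1.swap, K.2⟩,
    fun K => by simp, fun K => by simp⟩

@[simp] lemma pairSwapEquiv_apply (n : ℕ) (K : Pairs n) :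
    ((pairSwapEquiv n K : Fin n × Fin n)) = K.1.swap := rfl

lemma key {n : ℕ} (A : Matrix (Fin n) (Fin n) ℚ) (X : Pairs n → ℚ) (i j : Fin n) :
    ∑ K : Pairs n, (A i K.1.1 * A j K.1.2 + A i K.1.2 * A j K.1.1) * X K
      = (A * matOf X * Aᵀ) i j := by
  have hrhs : (A * matOf X * Aᵀ) i j
      = ∑ p ∈ Finset.univ ×ˢ Finset.univ,
          A i p.1 * matOf X p.1 p.2 * A j p.2 := by
    rw [Finset.sum_product]
    simp only [Matrix.mul_apply, Matrix.transpose_apply, Finset.sum_mul, Finset.mul_sum]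
    rw [Finset.sum_comm]
  rw [hrhs]
  set f : Fin n × Fin n → ℚ := fun p => A i p.1 * matOf X p.1 p.2 * A j p.2 with hf
  have hsplit : ∑ p ∈ Finset.univ ×ˢ Finset.univ, f p
      = (∑ p ∈ (Finset.univ ×ˢ Finset.univ).filter (fun p => p.1 < p.2), f p)
        + ∑ p ∈ (Finset.univ ×ˢ Finset.univ).filter (fun p => p.2 < p.1), f p := by
    rw [← Finset.sum_filter_add_sum_filter_not (Finset.univ ×ˢ Finset.univ)
      (fun p => p.1 < p.2) f]
    congr 1
    rw [← Finset.sum_filter_add_sum_filter_not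
      ((Finset.univ ×ˢ Finset.univ).filter (fun p => ¬ p.1 < p.2))
      (fun p => p.2 < p.1) f]
    have h0 : ∑ p ∈ (((Finset.univ ×ˢ Finset.univ).filter
        (fun p : Fin n × Fin n => ¬ p.1 < p.2)).filter (fun p => ¬ p.2 < p.1)), f p = 0 := by
      apply Finset.sum_eq_zero
      intro p hp
      simp only [Finset.mem_filter] at hp
      have hpe : p.1 = p.2 := le_antisymm (not_lt.1 hp.2) (not_lt.1 hp.1.2)
      simp [hf, matOf, hpe]
    rw [h0, add_zero, Finset.filter_filter]
    congr 1
    ext p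
    simp only [Finset.mem_filter, Finset.mem_product, Finset.mem_univ, true_and, and_iff_right_iff_imp]
    exact fun h => not_lt_of_gt h
  rw [hsplit]
  have h1 : ∑ p ∈ (Finset.univ ×ˢ Finset.univ).filter (fun p : Fin n × Fin n => p.1 < p.2), f p
      = ∑ K : Pairs n, A i K.1.1 * X K * A j K.1.2 := by
    rw [Finset.sum_subtype (p := fun p : Fin n × Fin n => p.1 < p.2)
      ((Finset.univ ×ˢ Finset.univ).filter (fun p : Fin n × Fin n => p.1 < p.2))
      (by intro p; simp) f]
    apply Finset.sum_congr rfl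
    intro K _
    simp [hf, matOf_lt X K.2]
  have h2 : ∑ p ∈ (Finset.univ ×ˢ Finset.univ).filter (fun p : Fin n × Fin n => p.2 < p.1), f p
      = ∑ K : Pairs n, A i K.1.2 * X K * A j K.1.1 := by
    rw [Finset.sum_subtype (p := fun p : Fin n × Fin n => p.2 < p.1)
      ((Finset.univ ×ˢ Finset.univ).filter (fun p : Fin n × Fin n => p.2 < p.1))
      (by intro p; simp) f]
    rw [← Equiv.sum_comp (pairSwapEquiv n) (fun K => f K.1)]
    apply Finset.sum_congr rfl
    intro K _
    simp only [hf, pairSwapEquiv_apply, Prod.fst_swap, Prod.snd_swap]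
    rw [matOf_gt X K.2]
  rw [h1, h2, ← Finset.sum_add_distrib]
  apply Finset.sum_congr rfl
  intro K _
  ring

lemma mulVec_entry {n : ℕ} (A : Matrix (Fin n) (Fin n) ℚ) (X : Pairs n → ℚ)
    {i j : Fin n} (h : i < j) :
    (zeonSq A *ᵥ X) ⟨(i, j), h⟩ = (A * matOf X * Aᵀ) i j := by
  rw [← key A X i j]
  simp [Matrix.mulVec, dotProduct, zeonSq]

lemma symm_entry {n : ℕ} (A : Matrix (Fin n) (Fin n) ℚ) (X : Pairs n → ℚ) (i j : Fin n) :
    (A * matOf X * Aᵀ) j i = (A * matOf X * Aᵀ) i j := by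
  rw [← key A X i j, ← key A X j i]
  apply Finset.sum_congr rfl
  intro K _
  ring

theorem stmt5 {n : ℕ} (A : Matrix (Fin n) (Fin n) ℚ) (X : Pairs n → ℚ) :
    matOf (zeonSq A *ᵥ X) =
        A * matOf X * Aᵀ - Matrix.diagonal (fun i => (A * matOf X * Aᵀ) i i) ∧
      Matrix.trace (Matrix.diagonal (fun i => (A * matOf X * Aᵀ) i i)) =
        Matrix.trace (A * matOf X * Aᵀ) := by
  constructor
  · ext i j
    rcases lt_trichotomy i j with h | h | h
    · have hne : i ≠ j := ne_of_lt h
      rw [Matrix.sub_apply, Matrix.diagonal_apply_ne _ hne, sub_zero,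
        matOf_lt _ h, mulVec_entry A X h]
    · subst h
      rw [Matrix.sub_apply, Matrix.diagonal_apply_eq, sub_self, matOf_eq]
    · have hne : i ≠ j := ne_of_gt h
      rw [Matrix.sub_apply, Matrix.diagonal_apply_ne _ hne, sub_zero,
        matOf_gt _ h, mulVec_entry A X h, symm_entry]
  · simp [Matrix.trace, Matrix.diag]
end

section
/- Let A be an n×n matrix and X ∈ ℚ^{C(n,2)}, both with nonnegative entries. If X̂ = AᵀX̂A, then X·A^{∨2} = X. Similarly, if X̂ = AX̂Aᵀ, then A^{∨2}·Xᵀ = Xᵀ. -/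
open Matrix BigOperators Filter

lemma key_s6 {n : ℕ} (X : Pairs n → ℚ) (f : Fin n → Fin n → ℚ) :
    ∑ i, ∑ k, matOf X i k * f i k
      = ∑ I : Pairs n, X I * (f I.1.1 I.1.2 + f I.1.2 I.1.1) := by
  classical
  rw [← Finset.sum_product', Finset.univ_product_univ]
  set g : Fin n × Fin n → ℚ := fun p => matOf X p.1 p.2 * f p.1 p.2 with hg
  have hsplit : ∑ p : Fin n × Fin n, g p
      = ∑ p ∈ Finset.univ.filter (fun p : Fin n × Fin n => p.1 < p.2), g p
        + ∑ p ∈ Finset.univ.filter (fun p : Fin n × Fin n => ¬ p.1 < p.2), g p :=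
    (Finset.sum_filter_add_sum_filter_not _ _ _).symm
  have hsub : ∑ p ∈ Finset.univ.filter (fun p : Fin n × Fin n => ¬ p.1 < p.2), g p
      = ∑ p ∈ Finset.univ.filter (fun p : Fin n × Fin n => p.2 < p.1), g p := by
    refine (Finset.sum_subset ?_ ?_).symm
    · intro p hp
      simp only [Finset.mem_filter, Finset.mem_univ, true_and] at hp ⊢
      exact le_of_lt hp |>.not_gt
    · intro p hp hnp
      simp only [Finset.mem_filter, Finset.mem_univ, true_and] at hp hnp
      have : p.1 = p.2 := le_antisymm (not_lt.1 hnp) (not_lt.1 hp)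
      simp [hg, matOf, this]
  have hswap : ∑ p ∈ Finset.univ.filter (fun p : Fin n × Fin n => p.2 < p.1), g p
      = ∑ p ∈ Finset.univ.filter (fun p : Fin n × Fin n => p.1 < p.2), g p.swap := by
    refine Finset.sum_nbij' (fun p => p.swap) (fun p => p.swap) ?_ ?_ ?_ ?_ ?_
    · intro p hp; simp only [Finset.mem_filter, Finset.mem_univ, true_and] at hp ⊢; exact hp
    · intro p hp; simp only [Finset.mem_filter, Finset.mem_univ, true_and] at hp ⊢; exact hp
    · intro p _; simp
    · intro p _; simp
    · intro p _; rfl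
  rw [hsplit, hsub, hswap, ← Finset.sum_add_distrib]
  rw [Finset.sum_subtype (p := fun p : Fin n × Fin n => p.1 < p.2)
    (Finset.univ.filter (fun p : Fin n × Fin n => p.1 < p.2)) (by simp)
    (fun p => g p + g p.swap)]
  refine Finset.sum_congr rfl fun I _ => ?_
  obtain ⟨⟨i, j⟩, hij⟩ := I
  have h1 : ¬ j < i := le_of_lt hij |>.not_gt
  simp [hg, matOf, hij, h1]
  ring

theorem stmt6 {n : ℕ} (A : Matrix (Fin n) (Fin n) ℚ) (X : Pairs n → ℚ)
    (hA : ∀ i j, 0 ≤ A i j) (hX : ∀ I, 0 ≤ X I) :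
    (matOf X = Aᵀ * matOf X * A → X ᵥ* zeonSq A = X) ∧
      (matOf X = A * matOf X * Aᵀ → zeonSq A *ᵥ X = X) := by
  constructor
  · intro h
    funext J
    have hJ := congrFun (congrFun h J.1.1) J.1.2
    have : (Aᵀ * matOf X * A) J.1.1 J.1.2
        = ∑ i, ∑ k, matOf X i k * (A i J.1.1 * A k J.1.2) := by
      simp [Matrix.mul_apply, Finset.sum_mul, Finset.mul_sum, Matrix.transpose_apply]
      rw [Finset.sum_comm]
      refine Finset.sum_congr rfl fun i _ => Finset.sum_congr rfl fun k _ => by ring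
    rw [this, key_s6] at hJ
    have hX' : matOf X J.1.1 J.1.2 = X J := by
      simp [matOf, J.2]
    rw [hX'] at hJ
    rw [Matrix.vecMul, dotProduct, hJ]
    refine Finset.sum_congr rfl fun I _ => ?_
    simp only [zeonSq, Matrix.of_apply]
    ring
  · intro h
    funext I
    have hI := congrFun (congrFun h I.1.1) I.1.2
    have : (A * matOf X * Aᵀ) I.1.1 I.1.2
        = ∑ j, ∑ k, matOf X j k * (A I.1.1 j * A I.1.2 k) := by
      simp [Matrix.mul_apply, Finset.sum_mul, Finset.mul_sum, Matrix.transpose_apply]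
      rw [Finset.sum_comm]
      refine Finset.sum_congr rfl fun j _ => Finset.sum_congr rfl fun k _ => by ring
    rw [this, key_s6] at hI
    have hX' : matOf X I.1.1 I.1.2 = X I := by
      simp [matOf, I.2]
    rw [hX'] at hI
    rw [Matrix.mulVec, dotProduct, hI]
    refine Finset.sum_congr rfl fun J _ => ?_
    simp only [zeonSq, Matrix.of_apply]
    ring
end
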